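/- Let E = [−1,1]³, T > 0, and let J, vⁱ, Ãⁱ (symmetric), q be as in the energy identity setting: continuously differentiable on E × [0,T], 𝒜ⁱ = Ãⁱ − vⁱ·Id, GCL ∂J/∂τ = Σᵢ ∂vⁱ/∂ξⁱ, with q solving ∂(Jq)/∂τ + Σᵢ ∂(𝒜ⁱ q)/∂ξⁱ = 0 on E × [0,T]. Assume moreover: (a) J(ξ,τ) > 0 on E × [0,T]; (b) there is γ ≥ 0 with ‖Σᵢ₌₁³ ∂Ãⁱ/∂ξⁱ (ξ,τ)‖ ≤ 2γ J(ξ,τ) for all (ξ,τ) (operator norm); and (c) the outward boundary flux is nonnegative: for each i and all τ, qᵀ𝒜ⁱq ≥ 0 on the face ξⁱ = 1 and qᵀ𝒜ⁱq ≤ 0 on the face ξⁱ = −1. Then the weighted energy satisfies ∫_E J(ξ,T) ‖q(ξ,T)‖² dξ ≤ e^{2γT} ∫_E J(ξ,0) ‖q(ξ,0)‖² dξ, i.e. ‖q(T)‖_J ≤ e^{γT} ‖q(0)‖_J. -/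

import Mathlib

open Matrix MeasureTheory

section helpers
variable {X : Type*} [NormedAddCommGroup X] [NormedSpace ℝ X] {p : X}

lemma fderiv_mul_apply' {f g : X → ℝ} (hf : DifferentiableAt ℝ f p)
    (hg : DifferentiableAt ℝ g p) (w : X) :
    fderiv ℝ (fun x => f x * g x) p w = fderiv ℝ f p w * g p + f p * fderiv ℝ g p w := by
  rw [fderiv_fun_mul hf hg]
  simp only [ContinuousLinearMap.add_apply, ContinuousLinearMap.smul_apply, smul_eq_mul]
  ring

lemma fderiv_sum_apply'' {ι : Type*} {u : Finset ι} {A : ι → X → ℝ}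
    (h : ∀ i ∈ u, DifferentiableAt ℝ (A i) p) (w : X) :
    fderiv ℝ (fun x => ∑ i ∈ u, A i x) p w = ∑ i ∈ u, fderiv ℝ (A i) p w := by
  rw [fderiv_fun_sum h]
  simp

end helpers

lemma sum_algebra {m : ℕ} (c1 Jp : ℝ) (qa w : Fin m → ℝ) (z : Fin 3 → Fin m → ℝ)
    (A d : Fin 3 → Fin m → Fin m → ℝ) (DAab : Fin m → Fin m → ℝ)
    (hsym : ∀ i a b, A i a b = A i b a)
    (hP : ∀ a, c1 * qa a + Jp * w a
      + ∑ i : Fin 3, ∑ b, (d i a b * qa b + A i a b * z i b) = 0)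
    (hd : ∀ a, (∑ i : Fin 3, ∑ b, d i a b * qa b) = (∑ b, DAab a b * qa b) - c1 * qa a) :
    c1 * (∑ a, qa a * qa a) + Jp * (∑ a, (w a * qa a + qa a * w a))
      = -(∑ i : Fin 3, ∑ a, (z i a * (∑ b, A i a b * qa b)
            + qa a * (∑ b, (d i a b * qa b + A i a b * z i b))))
        - ∑ a, qa a * (∑ b, DAab a b * qa b) := by
  have E1 : ∀ i, (∑ a, z i a * (∑ b, A i a b * qa b))
      = ∑ a, qa a * (∑ b, A i a b * z i b) := by
    intro i
    calc (∑ a, z i a * (∑ b, A i a b * qa b))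
        = ∑ a, ∑ b, z i a * (A i a b * qa b) := by simp only [Finset.mul_sum]
      _ = ∑ b, ∑ a, z i a * (A i a b * qa b) := Finset.sum_comm
      _ = ∑ a, ∑ b, qa a * (A i a b * z i b) := by
          refine Finset.sum_congr rfl fun a _ => Finset.sum_congr rfl fun b _ => ?_
          rw [hsym i b a]; ring
      _ = ∑ a, qa a * (∑ b, A i a b * z i b) := by simp only [Finset.mul_sum]
  calc c1 * (∑ a, qa a * qa a) + Jp * (∑ a, (w a * qa a + qa a * w a))
      = ∑ a, (c1 * (qa a * qa a) + Jp * (w a * qa a + qa a * w a)) := by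
        rw [Finset.mul_sum, Finset.mul_sum, ← Finset.sum_add_distrib]
    _ = ∑ a, (-(∑ i : Fin 3, (qa a * (∑ b, A i a b * z i b)
            + qa a * (∑ b, (d i a b * qa b + A i a b * z i b))))
          - qa a * (∑ b, DAab a b * qa b)) := by
        refine Finset.sum_congr rfl fun a _ => ?_
        have hPa := hP a
        have hda := hd a
        simp only [mul_add, Finset.sum_add_distrib, ← Finset.mul_sum] at hPa ⊢
        linear_combination (2 : ℝ) * qa a * hPa - qa a * hda
    _ = (∑ a, -(∑ i : Fin 3, (qa a * (∑ b, A i a b * z i b)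
            + qa a * (∑ b, (d i a b * qa b + A i a b * z i b)))))
          - ∑ a, qa a * (∑ b, DAab a b * qa b) := Finset.sum_sub_distrib _ _
    _ = -(∑ a, ∑ i : Fin 3, (qa a * (∑ b, A i a b * z i b)
            + qa a * (∑ b, (d i a b * qa b + A i a b * z i b))))
          - ∑ a, qa a * (∑ b, DAab a b * qa b) := by rw [Finset.sum_neg_distrib]
    _ = -(∑ i : Fin 3, ∑ a, (qa a * (∑ b, A i a b * z i b)
            + qa a * (∑ b, (d i a b * qa b + A i a b * z i b))))
          - ∑ a, qa a * (∑ b, DAab a b * qa b) := by rw [Finset.sum_comm]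
    _ = -(∑ i : Fin 3, ∑ a, (z i a * (∑ b, A i a b * qa b)
            + qa a * (∑ b, (d i a b * qa b + A i a b * z i b))))
          - ∑ a, qa a * (∑ b, DAab a b * qa b) := by
        congr 2
        refine Finset.sum_congr rfl fun i _ => ?_
        rw [Finset.sum_add_distrib, Finset.sum_add_distrib, E1 i]

lemma key_identity {m : ℕ}
    (J : (Fin 3 → ℝ) × ℝ → ℝ) (hJ : ContDiff ℝ 1 J)
    (v : Fin 3 → ((Fin 3 → ℝ) × ℝ → ℝ)) (hv : ∀ i, ContDiff ℝ 1 (v i))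
    (At : Fin 3 → ((Fin 3 → ℝ) × ℝ → Matrix (Fin m) (Fin m) ℝ))
    (hAt : ∀ i a b, ContDiff ℝ 1 (fun x => At i x a b))
    (q : (Fin 3 → ℝ) × ℝ → (Fin m → ℝ)) (hq : ContDiff ℝ 1 q)
    (𝒜 : Fin 3 → ((Fin 3 → ℝ) × ℝ → Matrix (Fin m) (Fin m) ℝ))
    (h𝒜 : ∀ i x, 𝒜 i x = At i x - v i x • (1 : Matrix (Fin m) (Fin m) ℝ))
    (p : (Fin 3 → ℝ) × ℝ)
    (hsymm : ∀ i, (𝒜 i p).IsSymm)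
    (hGCLp : fderiv ℝ J p (0, 1) = ∑ i : Fin 3, fderiv ℝ (v i) p (Pi.single i 1, 0))
    (hPDEp : fderiv ℝ (fun x => J x • q x) p (0, 1)
        + ∑ i : Fin 3, fderiv ℝ (fun x => 𝒜 i x *ᵥ q x) p (Pi.single i 1, 0) = 0)
    (DAp : Matrix (Fin m) (Fin m) ℝ)
    (hDAp : ∀ a b, DAp a b
      = ∑ i : Fin 3, fderiv ℝ (fun x => At i x a b) p (Pi.single i 1, 0)) :
    fderiv ℝ (fun x => J x * (q x ⬝ᵥ q x)) p (0, 1)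
      = -(∑ i : Fin 3, fderiv ℝ (fun x => q x ⬝ᵥ (𝒜 i x *ᵥ q x)) p (Pi.single i 1, 0))
        - q p ⬝ᵥ (DAp *ᵥ q p) := by
  classical
  have hqa : ∀ a, ContDiff ℝ 1 fun x => q x a := fun a => contDiff_pi.1 hq a
  have hAe : ∀ i a b, ContDiff ℝ 1 fun x => 𝒜 i x a b := by
    intro i a b
    have h1 : (fun x => 𝒜 i x a b)
        = fun x => At i x a b - v i x * (1 : Matrix (Fin m) (Fin m) ℝ) a b := by
      funext x; rw [h𝒜 i x]; simp [Matrix.sub_apply]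
    rw [h1]
    exact (hAt i a b).sub ((hv i).mul contDiff_const)
  have dJ : Differentiable ℝ J := hJ.differentiable one_ne_zero
  have dq : ∀ a, Differentiable ℝ fun x => q x a := fun a => (hqa a).differentiable one_ne_zero
  have dA : ∀ i a b, Differentiable ℝ fun x => 𝒜 i x a b :=
    fun i a b => (hAe i a b).differentiable one_ne_zero
  have dAt' : ∀ i a b, Differentiable ℝ fun x => At i x a b :=
    fun i a b => (hAt i a b).differentiable one_ne_zero
  have dv' : ∀ i, Differentiable ℝ (v i) := fun i => (hv i).differentiable one_ne_zero
  -- componentwise PDE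
  have hPDEa : ∀ a,
      fderiv ℝ (fun x => J x * q x a) p ((0 : Fin 3 → ℝ), (1 : ℝ))
        + ∑ i : Fin 3, fderiv ℝ (fun x => ∑ b, 𝒜 i x a b * q x b) p (Pi.single i 1, 0)
        = 0 := by
    intro a
    have hsmul : (fun x => J x • q x) = fun x => fun c => J x * q x c := by
      funext x c; simp
    have hmv : ∀ i, (fun x => 𝒜 i x *ᵥ q x) = fun x => fun c => ∑ b, 𝒜 i x c b * q x b := by
      intro i; funext x c; simp [Matrix.mulVec, dotProduct]
    have h1 : fderiv ℝ (fun x => J x • q x) p ((0 : Fin 3 → ℝ), (1 : ℝ)) a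
        = fderiv ℝ (fun x => J x * q x a) p ((0 : Fin 3 → ℝ), (1 : ℝ)) := by
      rw [hsmul, fderiv_pi (fun c => (dJ p).fun_mul (dq c p))]
      simp
    have h2 : ∀ i, fderiv ℝ (fun x => 𝒜 i x *ᵥ q x) p (Pi.single i 1, 0) a
        = fderiv ℝ (fun x => ∑ b, 𝒜 i x a b * q x b) p (Pi.single i 1, 0) := by
      intro i
      rw [hmv i, fderiv_pi (fun c => DifferentiableAt.fun_sum fun b _ => (dA i c b p).fun_mul (dq b p))]
      simp
    have h0 := congrFun hPDEp a
    simp only [Pi.add_apply, Finset.sum_apply, Pi.zero_apply, h1, h2] at h0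
    exact h0
  -- expanded PDE
  have hP : ∀ a, fderiv ℝ J p ((0 : Fin 3 → ℝ), (1 : ℝ)) * q p a
      + J p * fderiv ℝ (fun x => q x a) p ((0 : Fin 3 → ℝ), (1 : ℝ))
      + ∑ i : Fin 3, ∑ b,
          (fderiv ℝ (fun x => 𝒜 i x a b) p (Pi.single i 1, 0) * q p b
            + 𝒜 i p a b * fderiv ℝ (fun x => q x b) p (Pi.single i 1, 0)) = 0 := by
    intro a
    have e1 := fderiv_mul_apply' (dJ p) (dq a p) ((0 : Fin 3 → ℝ), (1 : ℝ))
    have e2 : ∀ i : Fin 3, fderiv ℝ (fun x => ∑ b, 𝒜 i x a b * q x b) p (Pi.single i 1, 0)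
        = ∑ b, (fderiv ℝ (fun x => 𝒜 i x a b) p (Pi.single i 1, 0) * q p b
            + 𝒜 i p a b * fderiv ℝ (fun x => q x b) p (Pi.single i 1, 0)) := by
      intro i
      rw [fderiv_sum_apply'' (fun b _ => (dA i a b p).fun_mul (dq b p))]
      exact Finset.sum_congr rfl fun b _ => fderiv_mul_apply' (dA i a b p) (dq b p) _
    have h0 := hPDEa a
    rw [e1] at h0
    simp only [e2] at h0
    exact h0
  -- divergence of 𝒜 entries
  have hd : ∀ a, (∑ i : Fin 3, ∑ b,
        fderiv ℝ (fun x => 𝒜 i x a b) p (Pi.single i 1, 0) * q p b)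
      = (∑ b, DAp a b * q p b) - fderiv ℝ J p ((0 : Fin 3 → ℝ), (1 : ℝ)) * q p a := by
    intro a
    have hdab : ∀ i b, fderiv ℝ (fun x => 𝒜 i x a b) p (Pi.single i 1, 0)
        = fderiv ℝ (fun x => At i x a b) p (Pi.single i 1, 0)
          - fderiv ℝ (v i) p (Pi.single i 1, 0) * (if a = b then (1:ℝ) else 0) := by
      intro i b
      have h1 : (fun x => 𝒜 i x a b)
          = fun x => At i x a b - v i x * (if a = b then (1:ℝ) else 0) := by
        funext x; rw [h𝒜 i x]; simp [Matrix.sub_apply, Matrix.one_apply]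
      rw [h1, fderiv_fun_sub (dAt' i a b p) ((dv' i p).fun_mul (differentiableAt_const _))]
      have h2 := fderiv_mul_apply' (dv' i p) (differentiableAt_const (if a = b then (1:ℝ) else 0))
        (Pi.single i 1, (0:ℝ))
      simp only [ContinuousLinearMap.sub_apply]
      rw [h2]
      simp
    calc (∑ i : Fin 3, ∑ b, fderiv ℝ (fun x => 𝒜 i x a b) p (Pi.single i 1, 0) * q p b)
        = ∑ i : Fin 3, ((∑ b, fderiv ℝ (fun x => At i x a b) p (Pi.single i 1, 0) * q p b)
            - fderiv ℝ (v i) p (Pi.single i 1, 0) * q p a) := by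
          refine Finset.sum_congr rfl fun i _ => ?_
          simp only [hdab i, sub_mul, mul_ite, ite_mul, mul_one, mul_zero, zero_mul,
            Finset.sum_sub_distrib, Finset.sum_ite_eq, Finset.mem_univ, if_true]
      _ = (∑ b, DAp a b * q p b) - fderiv ℝ J p ((0 : Fin 3 → ℝ), (1 : ℝ)) * q p a := by
          rw [Finset.sum_sub_distrib, ← Finset.sum_mul, ← hGCLp, Finset.sum_comm]
          congr 1
          refine Finset.sum_congr rfl fun b _ => ?_
          rw [← Finset.sum_mul, ← hDAp a b]
  -- symmetry
  have hsym : ∀ i a b, 𝒜 i p a b = 𝒜 i p b a := by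
    intro i a b
    have := (hsymm i).eq  -- (𝒜 i p)ᵀ = 𝒜 i p ??
    exact (congrFun (congrFun this.symm a) b : _)
  -- rewrite the goal
  have gL : fderiv ℝ (fun x => J x * (q x ⬝ᵥ q x)) p ((0 : Fin 3 → ℝ), (1 : ℝ))
      = fderiv ℝ J p ((0 : Fin 3 → ℝ), (1 : ℝ)) * (∑ a, q p a * q p a)
        + J p * (∑ a, (fderiv ℝ (fun x => q x a) p ((0 : Fin 3 → ℝ), (1 : ℝ)) * q p a
            + q p a * fderiv ℝ (fun x => q x a) p ((0 : Fin 3 → ℝ), (1 : ℝ)))) := by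
    have h1 : (fun x => J x * (q x ⬝ᵥ q x)) = fun x => J x * ∑ a, q x a * q x a := by
      funext x; simp [dotProduct]
    rw [h1, fderiv_mul_apply' (dJ p)
      (DifferentiableAt.fun_sum fun a _ => (dq a p).fun_mul (dq a p)) _]
    congr 1
    rw [fderiv_sum_apply'' (fun a _ => (dq a p).fun_mul (dq a p))]
    exact congrArg _ (Finset.sum_congr rfl fun a _ => fderiv_mul_apply' (dq a p) (dq a p) _)
  have gR : ∀ i : Fin 3, fderiv ℝ (fun x => q x ⬝ᵥ (𝒜 i x *ᵥ q x)) p (Pi.single i 1, 0)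
      = ∑ a, (fderiv ℝ (fun x => q x a) p (Pi.single i 1, 0) * (∑ b, 𝒜 i p a b * q p b)
          + q p a * (∑ b, (fderiv ℝ (fun x => 𝒜 i x a b) p (Pi.single i 1, 0) * q p b
              + 𝒜 i p a b * fderiv ℝ (fun x => q x b) p (Pi.single i 1, 0)))) := by
    intro i
    have h1 : (fun x => q x ⬝ᵥ (𝒜 i x *ᵥ q x))
        = fun x => ∑ a, q x a * (∑ b, 𝒜 i x a b * q x b) := by
      funext x; simp [dotProduct, Matrix.mulVec]
    have dInner : ∀ a, DifferentiableAt ℝ (fun x => ∑ b, 𝒜 i x a b * q x b) p :=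
      fun a => DifferentiableAt.fun_sum fun b _ => (dA i a b p).fun_mul (dq b p)
    rw [h1, fderiv_sum_apply'' (fun a _ => (dq a p).fun_mul (dInner a))]
    refine Finset.sum_congr rfl fun a _ => ?_
    rw [fderiv_mul_apply' (dq a p) (dInner a)]
    congr 1
    rw [fderiv_sum_apply'' (fun b _ => (dA i a b p).fun_mul (dq b p))]
    exact congrArg _ (Finset.sum_congr rfl fun b _ => fderiv_mul_apply' (dA i a b p) (dq b p) _)
  have gD : q p ⬝ᵥ (DAp *ᵥ q p) = ∑ a, q p a * (∑ b, DAp a b * q p b) := by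
    simp [dotProduct, Matrix.mulVec]
  have gRs : (∑ i : Fin 3, fderiv ℝ (fun x => q x ⬝ᵥ (𝒜 i x *ᵥ q x)) p (Pi.single i 1, 0))
      = ∑ i : Fin 3, ∑ a,
          (fderiv ℝ (fun x => q x a) p (Pi.single i 1, 0) * (∑ b, 𝒜 i p a b * q p b)
          + q p a * (∑ b, (fderiv ℝ (fun x => 𝒜 i x a b) p (Pi.single i 1, 0) * q p b
              + 𝒜 i p a b * fderiv ℝ (fun x => q x b) p (Pi.single i 1, 0)))) :=
    Finset.sum_congr rfl fun i _ => gR i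
  rw [gL, gRs, gD]
  exact sum_algebra _ _ _ _ _ _ _ _ hsym hP hd

lemma quad_form_bound {m : ℕ} (M : Matrix (Fin m) (Fin m) ℝ) (x : Fin m → ℝ) :
    |x ⬝ᵥ (M *ᵥ x)| ≤ ‖Matrix.toEuclideanCLM (𝕜 := ℝ) M‖ * (x ⬝ᵥ x) := by
  set A := Matrix.toEuclideanCLM (𝕜 := ℝ) M with hA
  set y : EuclideanSpace ℝ (Fin m) := (WithLp.equiv 2 _).symm x with hy
  have h1 : x ⬝ᵥ (M *ᵥ x) = inner ℝ y (A y) := by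
    rw [hA, hy]
    simp [PiLp.inner_apply, Matrix.toEuclideanCLM_toLp, Matrix.toLin'_apply,
      dotProduct, mul_comm]
  have h2 : x ⬝ᵥ x = ‖y‖ ^ 2 := by
    rw [hy, EuclideanSpace.norm_sq_eq]
    simp [dotProduct, sq]
  rw [h1, h2]
  calc |(inner ℝ y (A y) : ℝ)| ≤ ‖y‖ * ‖A y‖ := abs_real_inner_le_norm _ _
    _ ≤ ‖y‖ * (‖A‖ * ‖y‖) := by
        gcongr; exact A.le_opNorm y
    _ = ‖A‖ * ‖y‖ ^ 2 := by ring

/-- **Well-posedness energy bound.** On `E = [−1,1]³` and `[0,T]`, with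
`𝒜 i = Ã i − v i • Id` (symmetric `Ã i`), the GCL, and the conservative form of
the mapped system in force, if moreover (a) `J > 0` on `E × [0,T]`, (b) the
operator norm of `Σ i ∂Ã i/∂ξ i` is bounded by `2γJ` pointwise, and (c) the
outward boundary flux is nonnegative (`qᵀ𝒜 i q ≥ 0` on the face `ξ i = 1`,
`≤ 0` on the face `ξ i = −1`), then the weighted energy satisfies
`∫_E J(·,T)‖q(·,T)‖² ≤ e^{2γT} ∫_E J(·,0)‖q(·,0)‖²`. -/
theorem wellPosedness_energy_bound
    (m : ℕ) (hm : 1 ≤ m) (T : ℝ) (hT : 0 < T)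
    (E : Set (Fin 3 → ℝ)) (hE : E = Set.Icc (fun _ => (-1 : ℝ)) (fun _ => (1 : ℝ)))
    (J : (Fin 3 → ℝ) × ℝ → ℝ) (hJ : ContDiff ℝ 1 J)
    (v : Fin 3 → ((Fin 3 → ℝ) × ℝ → ℝ)) (hv : ∀ i, ContDiff ℝ 1 (v i))
    (At : Fin 3 → ((Fin 3 → ℝ) × ℝ → Matrix (Fin m) (Fin m) ℝ))
    (hAt : ∀ i a b, ContDiff ℝ 1 (fun x => At i x a b))
    (hAtsymm : ∀ i, ∀ p ∈ E ×ˢ Set.Icc (0 : ℝ) T, (At i p).IsSymm)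
    (q : (Fin 3 → ℝ) × ℝ → (Fin m → ℝ)) (hq : ContDiff ℝ 1 q)
    (𝒜 : Fin 3 → ((Fin 3 → ℝ) × ℝ → Matrix (Fin m) (Fin m) ℝ))
    (h𝒜 : ∀ i x, 𝒜 i x = At i x - v i x • (1 : Matrix (Fin m) (Fin m) ℝ))
    (hGCL : ∀ p ∈ E ×ˢ Set.Icc (0 : ℝ) T,
      fderiv ℝ J p (0, 1) = ∑ i : Fin 3, fderiv ℝ (v i) p (Pi.single i 1, 0))
    (hPDE : ∀ p ∈ E ×ˢ Set.Icc (0 : ℝ) T,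
      fderiv ℝ (fun x => J x • q x) p (0, 1)
        + ∑ i : Fin 3, fderiv ℝ (fun x => 𝒜 i x *ᵥ q x) p (Pi.single i 1, 0) = 0)
    -- (a) positivity of the Jacobian
    (hJpos : ∀ p ∈ E ×ˢ Set.Icc (0 : ℝ) T, 0 < J p)
    -- (b) operator-norm bound on the divergence of the contravariant coefficient matrices
    (γ : ℝ) (hγ : 0 ≤ γ)
    (DA : (Fin 3 → ℝ) × ℝ → Matrix (Fin m) (Fin m) ℝ)
    (hDA : ∀ p a b, DA p a b
      = ∑ i : Fin 3, fderiv ℝ (fun x => At i x a b) p (Pi.single i 1, 0))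
    (hopnorm : ∀ p ∈ E ×ˢ Set.Icc (0 : ℝ) T,
      ‖Matrix.toEuclideanCLM (𝕜 := ℝ) (DA p)‖ ≤ 2 * γ * J p)
    -- (c) nonnegative outward boundary flux
    (hbc : ∀ i : Fin 3, ∀ τ ∈ Set.Icc (0 : ℝ) T, ∀ ξ ∈ E,
      (ξ i = 1 → 0 ≤ q (ξ, τ) ⬝ᵥ (𝒜 i (ξ, τ) *ᵥ q (ξ, τ)))
        ∧ (ξ i = -1 → q (ξ, τ) ⬝ᵥ (𝒜 i (ξ, τ) *ᵥ q (ξ, τ)) ≤ 0)) :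
    ∫ ξ in E, J (ξ, T) * (q (ξ, T) ⬝ᵥ q (ξ, T))
      ≤ Real.exp (2 * γ * T) * ∫ ξ in E, J (ξ, 0) * (q (ξ, 0) ⬝ᵥ q (ξ, 0)) := by
  classical
  subst hE
  set a₀ : Fin 3 → ℝ := fun _ => (-1 : ℝ) with ha₀
  set b₀ : Fin 3 → ℝ := fun _ => (1 : ℝ) with hb₀
  set E : Set (Fin 3 → ℝ) := Set.Icc a₀ b₀ with hEdef
  have hEmeas : MeasurableSet E := measurableSet_Icc
  have hEcomp : IsCompact E := isCompact_Icc
  -- scalar smoothness facts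
  have hqa : ∀ a, ContDiff ℝ 1 fun x => q x a := fun a => contDiff_pi.1 hq a
  have hAe : ∀ i a b, ContDiff ℝ 1 fun x => 𝒜 i x a b := by
    intro i a b
    have h1 : (fun x => 𝒜 i x a b)
        = fun x => At i x a b - v i x * (1 : Matrix (Fin m) (Fin m) ℝ) a b := by
      funext x; rw [h𝒜 i x]; simp [Matrix.sub_apply]
    rw [h1]
    exact (hAt i a b).sub ((hv i).mul contDiff_const)
  -- the energy density and fluxes
  set g : (Fin 3 → ℝ) × ℝ → ℝ := fun x => J x * (q x ⬝ᵥ q x) with hgdef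
  set Φ : Fin 3 → (Fin 3 → ℝ) × ℝ → ℝ := fun i x => q x ⬝ᵥ (𝒜 i x *ᵥ q x) with hΦdef
  have hgC : ContDiff ℝ 1 g := by
    have h1 : g = fun x => J x * ∑ a, q x a * q x a := by
      funext x; simp [hgdef, dotProduct]
    rw [h1]
    exact hJ.mul (ContDiff.sum fun a _ => (hqa a).mul (hqa a))
  have hΦC : ∀ i, ContDiff ℝ 1 (Φ i) := by
    intro i
    have h1 : Φ i = fun x => ∑ a, q x a * ∑ b, 𝒜 i x a b * q x b := by
      funext x; simp [hΦdef, dotProduct, Matrix.mulVec]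
    rw [h1]
    exact ContDiff.sum fun a _ =>
      (hqa a).mul (ContDiff.sum fun b _ => (hAe i a b).mul (hqa b))
  have hgd : Differentiable ℝ g := hgC.differentiable one_ne_zero
  -- continuity of the time-derivative integrand
  have hgfc : Continuous fun x : (Fin 3 → ℝ) × ℝ =>
      fderiv ℝ g x ((0 : Fin 3 → ℝ), (1 : ℝ)) :=
    (hgC.continuous_fderiv one_ne_zero).clm_apply continuous_const
  -- integrability helper
  have hint : ∀ {f : (Fin 3 → ℝ) → ℝ}, Continuous f → IntegrableOn f E := fun hf =>
    hf.continuousOn.integrableOn_compact hEcomp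
  -- the energy
  set F : ℝ → ℝ := fun τ => ∫ ξ in E, g (ξ, τ) with hFdef
  set F' : ℝ → ℝ := fun τ => ∫ ξ in E, fderiv ℝ g (ξ, τ) ((0 : Fin 3 → ℝ), (1 : ℝ))
    with hF'def
  -- Step A: differentiation under the integral sign
  have hFderiv : ∀ τ₀ : ℝ, HasDerivAt F (F' τ₀) τ₀ := by
    intro τ₀
    obtain ⟨C, hC⟩ : ∃ C, ∀ x ∈ E ×ˢ Set.Icc (τ₀ - 1) (τ₀ + 1),
        ‖fderiv ℝ g x ((0 : Fin 3 → ℝ), (1 : ℝ))‖ ≤ C :=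
      (hEcomp.prod isCompact_Icc).exists_bound_of_continuousOn hgfc.continuousOn
    have key := hasDerivAt_integral_of_dominated_loc_of_deriv_le
      (μ := volume.restrict E) (x₀ := τ₀)
      (F := fun τ ξ => g (ξ, τ))
      (F' := fun τ ξ => fderiv ℝ g (ξ, τ) ((0 : Fin 3 → ℝ), (1 : ℝ)))
      (bound := fun _ => C) (Metric.ball_mem_nhds τ₀ one_pos)
      (Filter.Eventually.of_forall fun τ =>
        ((hgC.continuous.comp (continuous_id.prodMk continuous_const)).aestronglyMeasurable))
      (hint (hgC.continuous.comp (continuous_id.prodMk continuous_const)))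
      ((hgfc.comp (continuous_id.prodMk continuous_const)).aestronglyMeasurable)
      ?_ ?_ ?_
    · exact key.2
    · refine (ae_restrict_iff' hEmeas).2 (Filter.Eventually.of_forall fun ξ hξ => ?_)
      intro x hx
      refine hC (ξ, x) ⟨hξ, ?_⟩
      have := Metric.mem_ball.1 hx
      rw [Real.dist_eq] at this
      constructor <;> [linarith [abs_lt.1 this |>.1]; linarith [abs_lt.1 this |>.2]]
    · exact (integrableOn_const hEcomp.measure_lt_top.ne)
    · refine Filter.Eventually.of_forall fun ξ => fun x _ => ?_
      have hline : HasDerivAt (fun t : ℝ => ((ξ, t) : (Fin 3 → ℝ) × ℝ))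
          ((0 : Fin 3 → ℝ), (1 : ℝ)) x :=
        (hasDerivAt_const x ξ).prodMk (hasDerivAt_id x)
      exact (hgd (ξ, x)).hasFDerivAt.comp_hasDerivAt x hline
  -- Step B: the differential inequality
  have hstep : ∀ τ ∈ Set.Icc (0 : ℝ) T, F' τ ≤ 2 * γ * F τ := by
    intro τ hτ
    -- continuity facts at fixed τ
    have hqc : ∀ a, Continuous fun ξ : Fin 3 → ℝ => q (ξ, τ) a := fun a =>
      ((hqa a).continuous.comp (continuous_id.prodMk continuous_const))
    have hcΦ' : ∀ i : Fin 3, Continuous fun ξ : Fin 3 → ℝ =>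
        fderiv ℝ (Φ i) (ξ, τ) (Pi.single i 1, (0 : ℝ)) := fun i =>
      ((((hΦC i).continuous_fderiv one_ne_zero).comp
        (continuous_id.prodMk continuous_const)).clm_apply continuous_const)
    have hcDA : Continuous fun ξ : Fin 3 → ℝ => q (ξ, τ) ⬝ᵥ (DA (ξ, τ) *ᵥ q (ξ, τ)) := by
      have hDAe : ∀ a b, Continuous fun x : (Fin 3 → ℝ) × ℝ => DA x a b := by
        intro a b
        have h1 : (fun x : (Fin 3 → ℝ) × ℝ => DA x a b)
            = fun x => ∑ i : Fin 3, fderiv ℝ (fun y => At i y a b) x (Pi.single i 1, 0) := by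
          funext x; exact hDA x a b
        rw [h1]
        exact continuous_finset_sum _ fun i _ =>
          ((hAt i a b).continuous_fderiv one_ne_zero).clm_apply continuous_const
      have h2 : (fun ξ : Fin 3 → ℝ => q (ξ, τ) ⬝ᵥ (DA (ξ, τ) *ᵥ q (ξ, τ)))
          = fun ξ => ∑ a, q (ξ, τ) a * ∑ b, DA (ξ, τ) a b * q (ξ, τ) b := by
        funext ξ; simp [dotProduct, Matrix.mulVec]
      rw [h2]
      exact continuous_finset_sum _ fun a _ => (hqc a).mul <|
        continuous_finset_sum _ fun b _ =>
          ((hDAe a b).comp (continuous_id.prodMk continuous_const)).mul (hqc b)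
    have hgτc : Continuous fun ξ : Fin 3 → ℝ => g (ξ, τ) :=
      hgC.continuous.comp (continuous_id.prodMk continuous_const)
    -- pointwise identity on E
    have hkey : Set.EqOn (fun ξ => fderiv ℝ g (ξ, τ) ((0 : Fin 3 → ℝ), (1 : ℝ)))
        (fun ξ => -(∑ i : Fin 3, fderiv ℝ (Φ i) (ξ, τ) (Pi.single i 1, 0))
          - (q (ξ, τ) ⬝ᵥ (DA (ξ, τ) *ᵥ q (ξ, τ)))) E := by
      intro ξ hξ
      have hsymm : ∀ i, (𝒜 i (ξ, τ)).IsSymm := by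
        intro i
        have h1 := hAtsymm i (ξ, τ) ⟨hξ, hτ⟩
        rw [h𝒜]
        unfold Matrix.IsSymm at h1 ⊢
        rw [Matrix.transpose_sub, h1, Matrix.transpose_smul, Matrix.transpose_one]
      exact key_identity J hJ v hv At hAt q hq 𝒜 h𝒜 (ξ, τ) hsymm
        (hGCL (ξ, τ) ⟨hξ, hτ⟩) (hPDE (ξ, τ) ⟨hξ, hτ⟩) (DA (ξ, τ)) (hDA (ξ, τ))
    -- divergence theorem: flux integral is nonnegative
    have hdivpos : 0 ≤ ∫ ξ in E, ∑ i : Fin 3,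
        fderiv ℝ (Φ i) (ξ, τ) (Pi.single i 1, (0 : ℝ)) := by
      set Φf : Fin 3 → (Fin 3 → ℝ) → ℝ := fun i ξ => Φ i (ξ, τ) with hΦf
      set Φ' : Fin 3 → (Fin 3 → ℝ) → (Fin 3 → ℝ) →L[ℝ] ℝ := fun i ξ =>
        (fderiv ℝ (Φ i) (ξ, τ)).comp
          ((ContinuousLinearMap.id ℝ (Fin 3 → ℝ)).prod 0) with hΦ'
      have happ : ∀ (i : Fin 3) ξ, Φ' i ξ (Pi.single i 1)
          = fderiv ℝ (Φ i) (ξ, τ) (Pi.single i 1, (0 : ℝ)) := by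
        intro i ξ; simp [hΦ']
      have hle : a₀ ≤ b₀ := fun i => by norm_num [ha₀, hb₀]
      have Hd : ∀ x ∈ (Set.pi Set.univ fun i => Set.Ioo (a₀ i) (b₀ i)) \ (∅ : Set _),
          ∀ i, HasFDerivAt (Φf i) (Φ' i x) x := by
        intro x _ i
        exact (((hΦC i).differentiable one_ne_zero (x, τ)).hasFDerivAt).comp x
          ((hasFDerivAt_id (𝕜 := ℝ) x).prodMk (hasFDerivAt_const τ x))
      have Hc : ∀ i, ContinuousOn (Φf i) (Set.Icc a₀ b₀) := fun i =>
        ((hΦC i).continuous.comp (continuous_id.prodMk continuous_const)).continuousOn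
      have Hi : IntegrableOn (fun x => ∑ i : Fin 3, Φ' i x (Pi.single i 1))
          (Set.Icc a₀ b₀) := by
        have h1 : (fun x => ∑ i : Fin 3, Φ' i x (Pi.single i 1))
            = fun x => ∑ i : Fin 3, fderiv ℝ (Φ i) (x, τ) (Pi.single i 1, (0 : ℝ)) := by
          funext x; exact Finset.sum_congr rfl fun i _ => happ i x
        rw [h1]
        exact hint (continuous_finset_sum _ fun i _ => hcΦ' i)
      have hdiv := MeasureTheory.integral_divergence_of_hasFDerivAt_off_countable'
        (n := 2) a₀ b₀ hle Φf Φ' ∅ Set.countable_empty Hc Hd Hi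
      have hL : (∫ x in Set.Icc a₀ b₀, ∑ i, Φ' i x (Pi.single i 1))
          = ∫ ξ in E, ∑ i : Fin 3, fderiv ℝ (Φ i) (ξ, τ) (Pi.single i 1, (0 : ℝ)) := by
        refine setIntegral_congr_fun hEmeas fun ξ _ => ?_
        exact Finset.sum_congr rfl fun i _ => happ i ξ
      rw [← hL, hdiv]
      refine Finset.sum_nonneg fun i _ => sub_nonneg.2 (le_trans (b := (0:ℝ)) ?_ ?_)
      · refine setIntegral_nonpos measurableSet_Icc fun x hx => ?_
        have hmem : Fin.insertNth (α := fun _ => ℝ) i (a₀ i) x ∈ Set.Icc a₀ b₀ :=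
          (Fin.insertNth_mem_Icc (n := 2) (α := fun _ => ℝ)).2 ⟨⟨le_rfl, hle i⟩, hx⟩
        have hco : Fin.insertNth (α := fun _ => ℝ) i (a₀ i) x i = -1 := by
          rw [Fin.insertNth_apply_same, ha₀]
        simp only [hΦf, hΦdef]
        exact (hbc i τ hτ _ hmem).2 hco
      · refine setIntegral_nonneg measurableSet_Icc fun x hx => ?_
        have hmem : Fin.insertNth (α := fun _ => ℝ) i (b₀ i) x ∈ Set.Icc a₀ b₀ :=
          (Fin.insertNth_mem_Icc (n := 2) (α := fun _ => ℝ)).2 ⟨⟨hle i, le_rfl⟩, hx⟩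
        have hco : Fin.insertNth (α := fun _ => ℝ) i (b₀ i) x i = 1 := by
          rw [Fin.insertNth_apply_same, hb₀]
        simp only [hΦf, hΦdef]
        exact (hbc i τ hτ _ hmem).1 hco
    -- quadratic form bound
    have hquad : -(∫ ξ in E, q (ξ, τ) ⬝ᵥ (DA (ξ, τ) *ᵥ q (ξ, τ)))
        ≤ 2 * γ * ∫ ξ in E, g (ξ, τ) := by
      rw [← integral_neg, ← MeasureTheory.integral_const_mul]
      refine setIntegral_mono_on ((hint hcDA).neg)
        (hint (continuous_const.mul hgτc)) hEmeas fun ξ hξ => ?_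
      have h1 := quad_form_bound (DA (ξ, τ)) (q (ξ, τ))
      have h2 := hopnorm (ξ, τ) ⟨hξ, hτ⟩
      have h3 : 0 ≤ q (ξ, τ) ⬝ᵥ q (ξ, τ) :=
        Finset.sum_nonneg fun a _ => mul_self_nonneg _
      have h4 : ‖Matrix.toEuclideanCLM (𝕜 := ℝ) (DA (ξ, τ))‖ * (q (ξ, τ) ⬝ᵥ q (ξ, τ))
          ≤ (2 * γ * J (ξ, τ)) * (q (ξ, τ) ⬝ᵥ q (ξ, τ)) :=
        mul_le_mul_of_nonneg_right h2 h3
      calc -(q (ξ, τ) ⬝ᵥ (DA (ξ, τ) *ᵥ q (ξ, τ)))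
          ≤ |q (ξ, τ) ⬝ᵥ (DA (ξ, τ) *ᵥ q (ξ, τ))| := neg_le_abs _
        _ ≤ ‖Matrix.toEuclideanCLM (𝕜 := ℝ) (DA (ξ, τ))‖ * (q (ξ, τ) ⬝ᵥ q (ξ, τ)) := h1
        _ ≤ (2 * γ * J (ξ, τ)) * (q (ξ, τ) ⬝ᵥ q (ξ, τ)) := h4
        _ = 2 * γ * g (ξ, τ) := by simp only [hgdef]; ring
    -- assemble
    show (∫ ξ in E, fderiv ℝ g (ξ, τ) ((0 : Fin 3 → ℝ), (1 : ℝ)))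
      ≤ 2 * γ * ∫ ξ in E, g (ξ, τ)
    rw [setIntegral_congr_fun hEmeas hkey,
      integral_sub (hint (continuous_finset_sum _ fun i _ => hcΦ' i).fun_neg) (hint hcDA),
      integral_neg]
    linarith
  -- Step C: Gronwall via monotonicity
  set G : ℝ → ℝ := fun τ => Real.exp (-(2 * γ) * τ) * F τ with hGdef
  have hGderiv : ∀ τ : ℝ, HasDerivAt G
      (Real.exp (-(2 * γ) * τ) * F' τ + (-(2 * γ)) * Real.exp (-(2 * γ) * τ) * F τ) τ := by
    intro τ
    have h0 : HasDerivAt (fun t : ℝ => -(2 * γ) * t) (-(2 * γ)) τ := by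
      simpa using (hasDerivAt_id τ).const_mul (-(2 * γ))
    have h1 : HasDerivAt (fun t : ℝ => Real.exp (-(2 * γ) * t))
        (Real.exp (-(2 * γ) * τ) * (-(2 * γ))) τ := h0.exp
    have := h1.fun_mul (hFderiv τ)
    refine this.congr_deriv ?_
    ring
  have hanti : AntitoneOn G (Set.Icc 0 T) := by
    refine antitoneOn_of_deriv_nonpos (convex_Icc 0 T) ?_ ?_ ?_
    · exact (continuous_iff_continuousAt.2 fun τ =>
        (hGderiv τ).differentiableAt.continuousAt).continuousOn
    · exact fun x _ => (hGderiv x).differentiableAt.differentiableWithinAt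
    · intro x hx
      rw [interior_Icc] at hx
      have hx' : x ∈ Set.Icc (0 : ℝ) T := ⟨hx.1.le, hx.2.le⟩
      have h1 := hstep x hx'
      rw [(hGderiv x).deriv]
      have h2 := Real.exp_pos (-(2 * γ) * x)
      nlinarith
  have hG : G T ≤ G 0 := hanti ⟨le_rfl, hT.le⟩ ⟨hT.le, le_rfl⟩ hT.le
  have hG0 : G 0 = F 0 := by simp [hGdef]
  have hmul : Real.exp (2 * γ * T) * Real.exp (-(2 * γ) * T) = 1 := by
    rw [← Real.exp_add, show 2 * γ * T + -(2 * γ) * T = 0 by ring, Real.exp_zero]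
  have hfin : F T ≤ Real.exp (2 * γ * T) * F 0 := by
    calc F T = (Real.exp (2 * γ * T) * Real.exp (-(2 * γ) * T)) * F T := by
          rw [hmul, one_mul]
      _ = Real.exp (2 * γ * T) * G T := by rw [hGdef]; ring
      _ ≤ Real.exp (2 * γ * T) * G 0 :=
          mul_le_mul_of_nonneg_left hG (Real.exp_nonneg _)
      _ = Real.exp (2 * γ * T) * F 0 := by rw [hG0]
  simpa only [hFdef, hgdef] using hfin
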